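/- Let η : ℝ → ℝ be continuous with η(ζ) → η_∞ as ζ → +∞ and η(ζ) → −η_∞ as ζ → −∞, for some constant η_∞ > 0 (a domain-wall function). Let υ_F > 0, θ ∈ ℝ with θ ≠ 0, and 𝔎 = (𝔎⁽¹⁾, 𝔎⁽²⁾) ∈ ℝ² with 𝔎 ≠ 0. For κ ∈ ℝ² set M(κ) = υ_F [[0, κ⁽¹⁾ + iκ⁽²⁾], [κ⁽¹⁾ − iκ⁽²⁾, 0]]; set 𝔎⊥ = (−𝔎⁽²⁾, 𝔎⁽¹⁾), ẑ = (𝔎⊥⁽¹⁾ + i𝔎⊥⁽²⁾)/|𝔎⊥|, and χ_± = (1/√2)(ẑ, ±1)ᵀ ∈ ℂ². Define α : ℝ → ℂ² by α(ζ) = exp(−(|θ|/(υ_F|𝔎|)) ∫₀^ζ η(s) ds) · χ₋ if θ > 0, and α(ζ) = exp(−(|θ|/(υ_F|𝔎|)) ∫₀^ζ η(s) ds) · χ₊ if θ < 0. Then α is differentiable, satisfies the one-dimensional Dirac equation −i M(𝔎) α′(ζ) + θ η(ζ) σ₃ α(ζ) = 0 for all ζ ∈ ℝ, and α belongs to L²(ℝ;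 ℂ²). -/

import Mathlib

open Matrix MeasureTheory Complex

noncomputable section

/-- `σ₃ = [[1,0],[0,-1]]`. -/
def sigma3 : Matrix (Fin 2) (Fin 2) ℂ := !![1, 0; 0, -1]

/-- `M(κ) = υ_F [[0, κ₁ + iκ₂], [κ₁ - iκ₂, 0]]`. -/
noncomputable def Mmat (υF : ℝ) (κ : Fin 2 → ℝ) : Matrix (Fin 2) (Fin 2) ℂ :=
  (υF : ℂ) • !![0, (κ 0 : ℂ) + Complex.I * (κ 1 : ℂ);
                (κ 0 : ℂ) - Complex.I * (κ 1 : ℂ), 0]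

/-- Euclidean norm on ℝ². -/
noncomputable def enorm' (w : Fin 2 → ℝ) : ℝ := Real.sqrt ((w 0) ^ 2 + (w 1) ^ 2)

open Set

lemma exp_mul_integrableOn_Iic (a : ℝ) {b : ℝ} (hb : 0 < b) :
    IntegrableOn (fun x : ℝ => Real.exp (b * x)) (Iic a) := by
  rw [← (Measure.measurePreserving_neg (volume : Measure ℝ)).integrableOn_comp_preimage
      (Homeomorph.neg ℝ).measurableEmbedding]
  simp only [Function.comp_def, neg_preimage, neg_Iic]
  rw [integrableOn_Ici_iff_integrableOn_Ioi]
  have := exp_neg_integrableOn_Ioi (-a) hb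
  simpa [mul_comm, neg_mul, mul_neg] using this

set_option maxHeartbeats 2000000 in
/-- The explicit zero mode of the 1D Dirac operator with a domain-wall mass:
`α(ζ) = exp(-(|θ|/(υ_F|𝔎|)) ∫₀^ζ η) χ_∓` (sign according to the sign of `θ`) is
differentiable, satisfies `-i M(𝔎) α' + θ η σ₃ α = 0`, and lies in `L²(ℝ; ℂ²)`. -/
theorem dirac_zero_mode
    (η : ℝ → ℝ) (hηc : Continuous η)
    (ηinf : ℝ) (hηinf : 0 < ηinf)
    (hplus : Filter.Tendsto η Filter.atTop (nhds ηinf))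
    (hminus : Filter.Tendsto η Filter.atBot (nhds (-ηinf)))
    (υF : ℝ) (hυ : 0 < υF)
    (θ : ℝ) (hθ : θ ≠ 0)
    (𝔎 : Fin 2 → ℝ) (h𝔎 : 𝔎 ≠ 0)
    (𝔎perp : Fin 2 → ℝ) (hperp : 𝔎perp = ![-(𝔎 1), 𝔎 0])
    (zhat : ℂ) (hz : zhat = (((𝔎perp 0 : ℝ) : ℂ) + Complex.I * ((𝔎perp 1 : ℝ) : ℂ)) / (enorm' 𝔎perp : ℂ))
    (χplus χminus : Fin 2 → ℂ)
    (hχp : χplus = fun i => (1 / Real.sqrt 2 : ℝ) * ![zhat, 1] i)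
    (hχm : χminus = fun i => (1 / Real.sqrt 2 : ℝ) * ![zhat, -1] i)
    (α : ℝ → (Fin 2 → ℂ))
    (hα : α = fun ζ =>
      ((Real.exp (-(|θ| / (υF * enorm' 𝔎)) * ∫ s in (0:ℝ)..ζ, η s) : ℝ) : ℂ) •
        (if 0 < θ then χminus else χplus)) :
    Differentiable ℝ α ∧
    (∀ ζ : ℝ,
      (-Complex.I) • (Mmat υF 𝔎).mulVec (deriv α ζ) +
        ((θ * η ζ : ℝ) : ℂ) • sigma3.mulVec (α ζ) = 0) ∧
    MeasureTheory.MemLp α 2 MeasureTheory.volume := by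
  -- basic positivity facts
  have hK : ¬(𝔎 0 = 0 ∧ 𝔎 1 = 0) := by
    rintro ⟨h0, h1⟩
    exact h𝔎 (funext fun i => by fin_cases i <;> simpa)
  have hsum : 0 < (𝔎 0) ^ 2 + (𝔎 1) ^ 2 := by
    rcases not_and_or.mp hK with h | h
    · positivity
    · positivity
  have hn : 0 < enorm' 𝔎 := Real.sqrt_pos.mpr hsum
  have hnp : enorm' 𝔎perp = enorm' 𝔎 := by
    rw [hperp]; unfold enorm'; simp; ring_nf
  have hn2C : (enorm' 𝔎 : ℂ) ^ 2 = (𝔎 0 : ℂ) ^ 2 + (𝔎 1 : ℂ) ^ 2 := by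
    have h2 : (enorm' 𝔎) ^ 2 = (𝔎 0) ^ 2 + (𝔎 1) ^ 2 := Real.sq_sqrt hsum.le
    exact_mod_cast congrArg (fun x : ℝ => (x : ℂ)) h2
  have hz' : zhat = ((-(𝔎 1 : ℝ) : ℂ) + Complex.I * (𝔎 0 : ℂ)) / (enorm' 𝔎 : ℂ) := by
    rw [hz, hnp, hperp]; norm_num
  set c : ℝ := |θ| / (υF * enorm' 𝔎) with hc
  have hcpos : 0 < c := by
    apply div_pos (abs_pos.mpr hθ) (by positivity)
  set F : ℝ → ℝ := fun u => ∫ s in (0:ℝ)..u, η s with hF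
  have hFd : ∀ ζ, HasDerivAt F (η ζ) ζ := fun ζ =>
    (hηc.integral_hasStrictDerivAt 0 ζ).hasDerivAt
  set f : ℝ → ℝ := fun ζ => Real.exp (-c * F ζ) with hf
  have hfd : ∀ ζ, HasDerivAt f (f ζ * (-c * η ζ)) ζ := fun ζ =>
    ((hFd ζ).const_mul (-c)).exp
  set χ : Fin 2 → ℂ := if 0 < θ then χminus else χplus with hχ
  have hα2 : α = fun ζ => ((f ζ : ℝ) : ℂ) • χ := hα
  have key : ∀ ζ, HasDerivAt α (((f ζ * (-c * η ζ) : ℝ) : ℂ) • χ) ζ := by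
    intro ζ
    rw [hα2]
    exact ((hfd ζ).ofReal_comp).smul_const χ
  have hdiff : Differentiable ℝ α := fun ζ => (key ζ).differentiableAt
  refine ⟨hdiff, ?_, ?_⟩
  · -- the ODE
    intro ζ
    rw [(key ζ).deriv, hα2]
    have hs2 : (Real.sqrt 2 : ℂ) ≠ 0 := by
      norm_cast; positivity
    have hnC : (enorm' 𝔎 : ℂ) ≠ 0 := by exact_mod_cast hn.ne'
    have hυC : (υF : ℂ) ≠ 0 := by exact_mod_cast hυ.ne'
    rcases hθ.lt_or_gt with hneg | hpos
    · have habs : |θ| = -θ := abs_of_neg hneg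
      have hχ' : χ = χplus := by rw [hχ, if_neg (not_lt.mpr hneg.le)]
      funext i
      fin_cases i
      · simp only [hχ', hχp, hz', hc, habs, Mmat, sigma3, Matrix.mulVec, dotProduct,
          Fin.sum_univ_two, Pi.add_apply, Pi.smul_apply, Pi.zero_apply, smul_eq_mul,
          Matrix.smul_apply, Matrix.cons_val', Matrix.cons_val_zero, Matrix.cons_val_one,
          Matrix.head_cons, Matrix.head_fin_const, Matrix.empty_val', Matrix.cons_val_fin_one, Matrix.of_apply]
        push_cast
        field_simp
        linear_combination (-((𝔎 1:ℂ) * ((f ζ:ℂ)*(θ:ℂ)*(η ζ:ℂ)) * (enorm' 𝔎:ℂ))) * Complex.I_sq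
      · simp only [hχ', hχp, hz', hc, habs, Mmat, sigma3, Matrix.mulVec, dotProduct,
          Fin.sum_univ_two, Pi.add_apply, Pi.smul_apply, Pi.zero_apply, smul_eq_mul,
          Matrix.smul_apply, Matrix.cons_val', Matrix.cons_val_zero, Matrix.cons_val_one,
          Matrix.head_cons, Matrix.head_fin_const, Matrix.empty_val', Matrix.cons_val_fin_one, Matrix.of_apply]
        push_cast
        field_simp
        linear_combination (Complex.I*(𝔎 0:ℂ)*(𝔎 1:ℂ)*((f ζ:ℂ)*(θ:ℂ)*(η ζ:ℂ)) - ((𝔎 0:ℂ)^2+(𝔎 1:ℂ)^2)*((f ζ:ℂ)*(θ:ℂ)*(η ζ:ℂ))) * Complex.I_sq + (-((f ζ:ℂ)*(θ:ℂ)*(η ζ:ℂ))) * hn2C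
    · have habs : |θ| = θ := abs_of_pos hpos
      have hχ' : χ = χminus := by rw [hχ, if_pos hpos]
      funext i
      fin_cases i
      · simp only [hχ', hχm, hz', hc, habs, Mmat, sigma3, Matrix.mulVec, dotProduct,
          Fin.sum_univ_two, Pi.add_apply, Pi.smul_apply, Pi.zero_apply, smul_eq_mul,
          Matrix.smul_apply, Matrix.cons_val', Matrix.cons_val_zero, Matrix.cons_val_one,
          Matrix.head_cons, Matrix.head_fin_const, Matrix.empty_val', Matrix.cons_val_fin_one, Matrix.of_apply]
        push_cast
        field_simp
        linear_combination (-((𝔎 1:ℂ) * ((f ζ:ℂ)*(θ:ℂ)*(η ζ:ℂ)) * (enorm' 𝔎:ℂ))) * Complex.I_sq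
      · simp only [hχ', hχm, hz', hc, habs, Mmat, sigma3, Matrix.mulVec, dotProduct,
          Fin.sum_univ_two, Pi.add_apply, Pi.smul_apply, Pi.zero_apply, smul_eq_mul,
          Matrix.smul_apply, Matrix.cons_val', Matrix.cons_val_zero, Matrix.cons_val_one,
          Matrix.head_cons, Matrix.head_fin_const, Matrix.empty_val', Matrix.cons_val_fin_one, Matrix.of_apply]
        push_cast
        field_simp
        linear_combination (-(Complex.I*(𝔎 0:ℂ)*(𝔎 1:ℂ)*((f ζ:ℂ)*(θ:ℂ)*(η ζ:ℂ)) - ((𝔎 0:ℂ)^2+(𝔎 1:ℂ)^2)*((f ζ:ℂ)*(θ:ℂ)*(η ζ:ℂ)))) * Complex.I_sq + ((f ζ:ℂ)*(θ:ℂ)*(η ζ:ℂ)) * hn2C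
  · -- L² membership
    have hαc : Continuous α := hdiff.continuous
    refine (memLp_two_iff_integrable_sq_norm hαc.aestronglyMeasurable).mpr ?_
    have hFc : Continuous F := continuous_iff_continuousAt.mpr fun ζ => (hFd ζ).continuousAt
    have hgc : Continuous fun ζ => Real.exp (-(2 * c) * F ζ) :=
      Real.continuous_exp.comp (continuous_const.mul hFc)
    have hnormα : (fun ζ => ‖α ζ‖ ^ 2) =
        fun ζ => Real.exp (-(2 * c) * F ζ) * ‖χ‖ ^ 2 := by
      funext ζ
      rw [hα2]
      simp only [norm_smul, Complex.norm_real, Real.norm_eq_abs,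
        abs_of_pos (Real.exp_pos _), mul_pow]
      congr 1
      simp only [hf, abs_of_pos (Real.exp_pos _)]
      rw [sq, ← Real.exp_add]
      ring_nf
    rw [hnormα]
    have hb : 0 < c * ηinf := by positivity
    -- thresholds
    obtain ⟨R₁, hR₁⟩ := Filter.eventually_atTop.mp
      (hplus.eventually (eventually_gt_nhds (by linarith : ηinf / 2 < ηinf)))
    obtain ⟨R₂, hR₂⟩ := Filter.eventually_atBot.mp
      (hminus.eventually (eventually_lt_nhds (by linarith : -ηinf < -(ηinf / 2))))
    set R : ℝ := max R₁ (max (-R₂) 0) with hR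
    have hRR₁ : R₁ ≤ R := le_max_left _ _
    have hR0 : (0 : ℝ) ≤ R := le_trans (le_max_right _ _) (le_max_right _ _)
    have hnegR : -R ≤ R₂ := by
      have : -R₂ ≤ R := le_trans (le_max_left _ _) (le_max_right _ _)
      linarith
    have hmain : Integrable (fun ζ => Real.exp (-(2 * c) * F ζ)) volume := by
      rw [← integrableOn_univ, show (univ : Set ℝ) = Iic (-R) ∪ (Ioc (-R) R ∪ Ioi R) by
        rw [Set.Ioc_union_Ioi_eq_Ioi (by linarith : -R ≤ R), Set.Iic_union_Ioi]]
      refine IntegrableOn.union ?_ (IntegrableOn.union ?_ ?_)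
      · -- left tail
        have hbound : ∀ ζ ∈ Iic (-R),
            Real.exp (-(2 * c) * F ζ) ≤
              Real.exp (-(2 * c) * F (-R) + c * ηinf * R) * Real.exp ((c * ηinf) * ζ) := by
          intro ζ hζ
          have hle : ζ ≤ -R := hζ
          have hint : F (-R) - F ζ = ∫ s in ζ..(-R), η s :=
            intervalIntegral.integral_interval_sub_left
              (hηc.intervalIntegrable _ _) (hηc.intervalIntegrable _ _)
          have hmono : (∫ s in ζ..(-R), η s) ≤ -((-R - ζ) * ηinf / 2) := by
            have := intervalIntegral.integral_mono_on (μ := volume) hle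
              (hηc.intervalIntegrable ζ (-R)) (intervalIntegrable_const)
              (fun x hx => (hR₂ x (le_trans hx.2 hnegR)).le)
            simpa [intervalIntegral.integral_const, smul_eq_mul] using this
          rw [← Real.exp_add, Real.exp_le_exp]
          nlinarith [hcpos, hint, hmono]
        refine Integrable.mono'
          ((exp_mul_integrableOn_Iic (-R) hb).const_mul
            (Real.exp (-(2 * c) * F (-R) + c * ηinf * R)))
          hgc.aestronglyMeasurable.restrict ?_
        rw [ae_restrict_iff' measurableSet_Iic]
        exact ae_of_all _ fun x hx => by
          rw [Real.norm_eq_abs, abs_of_pos (Real.exp_pos _)]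
          exact hbound x hx
      · exact Continuous.integrableOn_Ioc (μ := volume) hgc
      · -- right tail
        have hbound : ∀ ζ ∈ Ioi R,
            Real.exp (-(2 * c) * F ζ) ≤
              Real.exp (-(2 * c) * F R + c * ηinf * R) * Real.exp (-(c * ηinf) * ζ) := by
          intro ζ hζ
          have hle : R ≤ ζ := (le_of_lt hζ)
          have hint : F ζ - F R = ∫ s in R..ζ, η s :=
            intervalIntegral.integral_interval_sub_left
              (hηc.intervalIntegrable _ _) (hηc.intervalIntegrable _ _)
          have hmono : (ζ - R) * ηinf / 2 ≤ ∫ s in R..ζ, η s := by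
            have := intervalIntegral.integral_mono_on (μ := volume) hle
              (intervalIntegrable_const) (hηc.intervalIntegrable R ζ)
              (fun x hx => (hR₁ x (le_trans hRR₁ hx.1)).le)
            simpa [intervalIntegral.integral_const, smul_eq_mul] using this
          rw [← Real.exp_add, Real.exp_le_exp]
          nlinarith [hcpos, hint, hmono]
        refine Integrable.mono'
          ((exp_neg_integrableOn_Ioi R hb).const_mul
            (Real.exp (-(2 * c) * F R + c * ηinf * R)))
          hgc.aestronglyMeasurable.restrict ?_
        rw [ae_restrict_iff' measurableSet_Ioi]
        exact ae_of_all _ fun x hx => by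
          rw [Real.norm_eq_abs, abs_of_pos (Real.exp_pos _)]
          exact hbound x hx
    exact hmain.mul_const _
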